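/- The orthogonal projection P commutes with the inverse of the constraint inertia matrix: P M_c⁻¹ = M_c⁻¹ P = P M_c⁻¹ P. -/

import Mathlib

open Matrix

theorem P_commutes_Mc_inv {n : ℕ}
    (M P : Matrix (Fin n) (Fin n) ℝ) (hM : M.PosDef)
    (hP : P * P = P) (hPt : Pᵀ = P) (ν : ℝ) (hν : 0 < ν)
    (Mc : Matrix (Fin n) (Fin n) ℝ) (hMc : Mc = P * M * P + ν • (1 - P)) :
    P * Mc⁻¹ = Mc⁻¹ * P ∧ Mc⁻¹ * P = P * Mc⁻¹ * P := by
  have hQ : (1 - P) * (1 - P) = 1 - P := by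
    simp [sub_mul, mul_sub, hP]
  have hQt : (1 - P)ᵀ = 1 - P := by
    simp [transpose_sub, hPt]
  have hPH : Pᴴ = P := by
    ext i j
    simp only [conjTranspose_apply, star_trivial]
    exact congrFun (congrFun hPt i) j
  have hv : ∀ y : Fin n → ℝ, y ᵥ* P = P *ᵥ y := fun y => by
    calc y ᵥ* P = y ᵥ* Pᵀ := by rw [hPt]
    _ = P *ᵥ y := vecMul_transpose _ _
  have hvQ : ∀ y : Fin n → ℝ, y ᵥ* (1 - P) = (1 - P) *ᵥ y := fun y => by
    calc y ᵥ* (1 - P) = y ᵥ* (1 - P)ᵀ := by rw [hQt]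
    _ = (1 - P) *ᵥ y := vecMul_transpose _ _
  -- Mc is positive definite
  have hMcPD : Mc.PosDef := by
    refine posDef_iff_dotProduct_mulVec.mpr ⟨?_, ?_⟩
    · show Mcᴴ = Mc
      rw [hMc]
      rw [conjTranspose_add, conjTranspose_smul, conjTranspose_mul, conjTranspose_mul,
        hPH, hM.1, conjTranspose_sub, conjTranspose_one, hPH, star_trivial, mul_assoc]
    · intro x hx
      have hstar : star x = x := by simp
      rw [hMc, hstar, add_mulVec, dotProduct_add]
      have h1 : x ⬝ᵥ (P * M * P) *ᵥ x = (P *ᵥ x) ⬝ᵥ M *ᵥ (P *ᵥ x) := by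
        rw [← mulVec_mulVec, ← mulVec_mulVec, dotProduct_mulVec, hv]
      have h2 : x ⬝ᵥ (ν • (1 - P)) *ᵥ x = ν * (((1 - P) *ᵥ x) ⬝ᵥ ((1 - P) *ᵥ x)) := by
        rw [smul_mulVec, dotProduct_smul, smul_eq_mul]
        congr 1
        conv_lhs => rw [← hQ, ← mulVec_mulVec]
        rw [dotProduct_mulVec, hvQ]
      rw [h1, h2]
      by_cases hPx : P *ᵥ x = 0
      · have hQx : (1 - P) *ᵥ x = x := by
          rw [sub_mulVec, one_mulVec, hPx, sub_zero]
        rw [hPx, hQx]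
        simp only [mulVec_zero, dotProduct_zero, zero_add]
        apply mul_pos hν
        obtain ⟨i, hi⟩ := Function.ne_iff.mp hx
        have : (0:ℝ) < ∑ j, x j * x j :=
          Finset.sum_pos' (fun j _ => mul_self_nonneg _)
            ⟨i, Finset.mem_univ i, mul_self_pos.mpr hi⟩
        simpa [dotProduct] using this
      · have h1pos : 0 < (P *ᵥ x) ⬝ᵥ M *ᵥ (P *ᵥ x) := by
          have := hM.dotProduct_mulVec_pos hPx
          simpa using this
        have h2nn : 0 ≤ ν * (((1 - P) *ᵥ x) ⬝ᵥ ((1 - P) *ᵥ x)) := by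
          apply mul_nonneg hν.le
          simp only [dotProduct]
          exact Finset.sum_nonneg fun i _ => mul_self_nonneg _
        linarith
  have hdet : IsUnit Mc.det := isUnit_iff_ne_zero.mpr hMcPD.det_pos.ne'
  have hinv : Mc * Mc⁻¹ = 1 := mul_nonsing_inv Mc hdet
  have hinv' : Mc⁻¹ * Mc = 1 := nonsing_inv_mul Mc hdet
  have hcomm : P * Mc = Mc * P := by
    have e1 : P * Mc = P * M * P := by
      rw [hMc, mul_add, mul_smul_comm, mul_sub, mul_one, ← mul_assoc, ← mul_assoc, hP,
        sub_self, smul_zero, add_zero]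
    have e2 : Mc * P = P * M * P := by
      rw [hMc, add_mul, smul_mul_assoc, sub_mul, one_mul, mul_assoc (P * M), hP,
        sub_self, smul_zero, add_zero]
    rw [e1, e2]
  have key : P * Mc⁻¹ = Mc⁻¹ * P := by
    calc P * Mc⁻¹ = Mc⁻¹ * Mc * (P * Mc⁻¹) := by rw [hinv', one_mul]
    _ = Mc⁻¹ * (Mc * P) * Mc⁻¹ := by simp only [mul_assoc]
    _ = Mc⁻¹ * (P * Mc) * Mc⁻¹ := by rw [hcomm]
    _ = Mc⁻¹ * P * (Mc * Mc⁻¹) := by simp only [mul_assoc]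
    _ = Mc⁻¹ * P := by rw [hinv, mul_one]
  refine ⟨key, ?_⟩
  rw [mul_assoc, ← key, ← mul_assoc, hP]
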